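/- Let E be a nonzero c-semistable object of 𝒜 with v(cl E) = 1, and assume the set {cl F : F a subobject of E} ⊆ Γ is finite. Let E′′ be a subobject of E with E′′ ≠ 0 such that, for all sufficiently small ε > 0, the chain 0 ⊆ E′′ ⊆ E is the (c+ε)-HN filtration of E (that is: either E′′ = E and E is (c+ε)-semistable, or E′′ ≠ E, both E′′ and E/E′′ are (c+ε)-semistable, and μ_{c+ε}(E′′) > μ_{c+ε}(E/E′′)). If E is c⁻-stable, then the subobject E′′ is c-stable. -/

import Mathlib

open CategoryTheory CategoryTheory.Limits

/-- Cross-multiplied comparison `μ_c(x) ≤ μ_c(y)` of the slopes `μ_c = (d + c·v)/r`. -/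
def slopeLE {Γ : Type*} [AddCommGroup Γ] (d r : Γ →+ ℝ) (v : Γ →+ ℤ) (c : ℝ)
    (x y : Γ) : Prop :=
  (d x + c * (v x : ℝ)) * r y ≤ (d y + c * (v y : ℝ)) * r x

/-- Cross-multiplied comparison `μ_c(x) < μ_c(y)` of the slopes `μ_c = (d + c·v)/r`. -/
def slopeLT {Γ : Type*} [AddCommGroup Γ] (d r : Γ →+ ℝ) (v : Γ →+ ℤ) (c : ℝ)
    (x y : Γ) : Prop :=
  (d x + c * (v x : ℝ)) * r y < (d y + c * (v y : ℝ)) * r x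

/-- A nonzero object `E` is `c`-semistable if `μ_c(F) ≤ μ_c(E)` for every subobject
`F ⊆ E` with `F ≠ 0`, `F ≠ E`. -/
def IsSemistableAt {C : Type*} [Category C] [Abelian C] {Γ : Type*} [AddCommGroup Γ]
    (cl : C → Γ) (d r : Γ →+ ℝ) (v : Γ →+ ℤ) (c : ℝ) (E : C) : Prop :=
  ∀ (F : C) (f : F ⟶ E), Mono f → ¬ IsZero F → ¬ IsIso f →
    slopeLE d r v c (cl F) (cl E)

/-- A nonzero object `E` is `c`-stable if `μ_c(F) < μ_c(E)` for every subobject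
`F ⊆ E` with `F ≠ 0`, `F ≠ E`. -/
def IsStableAt {C : Type*} [Category C] [Abelian C] {Γ : Type*} [AddCommGroup Γ]
    (cl : C → Γ) (d r : Γ →+ ℝ) (v : Γ →+ ℤ) (c : ℝ) (E : C) : Prop :=
  ∀ (F : C) (f : F ⟶ E), Mono f → ¬ IsZero F → ¬ IsIso f →
    slopeLT d r v c (cl F) (cl E)

/-- `E` is `c⁺`-stable if it is `(c+ε)`-stable for all sufficiently small `ε > 0`. -/
def IsPlusStableAt {C : Type*} [Category C] [Abelian C] {Γ : Type*} [AddCommGroup Γ]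
    (cl : C → Γ) (d r : Γ →+ ℝ) (v : Γ →+ ℤ) (c : ℝ) (E : C) : Prop :=
  ∃ δ > (0 : ℝ), ∀ ε : ℝ, 0 < ε → ε < δ → IsStableAt cl d r v (c + ε) E

/-- `E` is `c⁻`-stable if it is `(c−ε)`-stable for all sufficiently small `ε > 0`. -/
def IsMinusStableAt {C : Type*} [Category C] [Abelian C] {Γ : Type*} [AddCommGroup Γ]
    (cl : C → Γ) (d r : Γ →+ ℝ) (v : Γ →+ ℤ) (c : ℝ) (E : C) : Prop :=
  ∃ δ > (0 : ℝ), ∀ ε : ℝ, 0 < ε → ε < δ → IsStableAt cl d r v (c - ε) E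


private lemma aux_nonpos (a s δ : ℝ) (hδ : 0 < δ)
    (h : ∀ ε : ℝ, 0 < ε → ε < δ → a + ε * s ≤ 0) : a ≤ 0 := by
  by_contra h'
  push_neg at h'
  rcases le_or_gt 0 s with hs | hs
  · have h3 := h (δ/2) (by linarith) (by linarith)
    nlinarith
  · have h1 : 0 < min (δ/2) (a/(-2*s)) := lt_min (by linarith) (div_pos h' (by linarith))
    have h2 : min (δ/2) (a/(-2*s)) < δ := lt_of_le_of_lt (min_le_left _ _) (by linarith)
    have h3 := h _ h1 h2
    have h4 : min (δ/2) (a/(-2*s)) ≤ a/(-2*s) := min_le_right _ _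
    have h5 : min (δ/2) (a/(-2*s)) * (-s) ≤ a/(-2*s) * (-s) :=
      mul_le_mul_of_nonneg_right h4 (by linarith)
    have hs0 : s ≠ 0 := ne_of_lt hs
    have h6 : a/(-2*s) * (-s) = a/2 := by field_simp
    nlinarith

private lemma aux_nonneg (a s δ : ℝ) (hδ : 0 < δ)
    (h : ∀ ε : ℝ, 0 < ε → ε < δ → 0 ≤ a + ε * s) : 0 ≤ a := by
  have := aux_nonpos (-a) (-s) δ hδ (fun ε h1 h2 => by have := h ε h1 h2; linarith)
  linarith

private lemma cl_cok {C : Type*} [Category C] [Abelian C] {Γ : Type*} [AddCommGroup Γ]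
    (cl : C → Γ)
    (hses : ∀ S : ShortComplex C, S.ShortExact → cl S.X₂ = cl S.X₁ + cl S.X₃)
    {X Y : C} (g : X ⟶ Y) (hg : Mono g) :
    cl Y = cl X + cl (cokernel g) := by
  haveI := hg
  exact hses (ShortComplex.mk g (cokernel.π g) (cokernel.condition g))
    { exact := ShortComplex.exact_cokernel g }

private lemma not_isZero_cok {C : Type*} [Category C] [Abelian C]
    {X Y : C} (g : X ⟶ Y) (hg : Mono g) (h : ¬ IsIso g) : ¬ IsZero (cokernel g) := by
  intro hz
  haveI := hg
  haveI := Preadditive.epi_of_isZero_cokernel g hz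
  exact h (isIso_of_mono_of_epi g)

private lemma isZero_cok_of_isIso {C : Type*} [Category C] [Abelian C]
    {X Y : C} (g : X ⟶ Y) (h : IsIso g) : IsZero (cokernel g) := by
  haveI := h
  exact (isZero_zero C).of_iso (cokernel.ofEpi g)

set_option maxHeartbeats 2000000 in
/-- Let `E` be a nonzero `c`-semistable object with `v(cl E) = 1` and let `0 ≠ E'' ⊆ E` be
such that `0 ⊆ E'' ⊆ E` is the `(c+ε)`-HN filtration of `E` for all small `ε > 0`. If `E` is
`c⁻`-stable then the subobject `E''` is `c`-stable. -/
theorem stmt_8 {C : Type*} [Category C] [Abelian C] {Γ : Type*} [AddCommGroup Γ]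
    (cl : C → Γ) (d r : Γ →+ ℝ) (v : Γ →+ ℤ)
    (hcl0 : ∀ X : C, IsZero X → cl X = 0)
    (hses : ∀ S : ShortComplex C, S.ShortExact → cl S.X₂ = cl S.X₁ + cl S.X₃)
    (hpos : ∀ X : C, ¬ IsZero X →
      0 ≤ r (cl X) ∧ 0 ≤ v (cl X) ∧ (r (cl X) = 0 → 0 < d (cl X) ∧ v (cl X) = 0))
    (E : C) (hE : ¬ IsZero E) (hvE : v (cl E) = 1) (c : ℝ)
    (hsst : IsSemistableAt cl d r v c E)
    (hfin : {g : Γ | ∃ (F : C) (f : F ⟶ E), Mono f ∧ cl F = g}.Finite)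
    (E'' : C) (f : E'' ⟶ E) (hf : Mono f) (hne : ¬ IsZero E'')
    (hHN : ∃ δ > (0 : ℝ), ∀ ε : ℝ, 0 < ε → ε < δ →
      ((IsIso f ∧ IsSemistableAt cl d r v (c + ε) E) ∨
       (¬ IsIso f ∧ IsSemistableAt cl d r v (c + ε) E'' ∧
         IsSemistableAt cl d r v (c + ε) (cokernel f) ∧
         slopeLT d r v (c + ε) (cl (cokernel f)) (cl E''))))
    (hminus : IsMinusStableAt cl d r v c E) :
    IsStableAt cl d r v c E'' := by
  intro F g hg hFne hgiso
  obtain ⟨δ₁, hδ₁, hHN⟩ := hHN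
  obtain ⟨δ₂, hδ₂, hminus⟩ := hminus
  haveI := hf; haveI := hg
  have hgfmono : Mono (g ≫ f) := mono_comp g f
  have hvEr : (v (cl E) : ℝ) = 1 := by rw [hvE]; norm_num
  have hrEpos : 0 < r (cl E) := by
    rcases (hpos E hE).1.lt_or_eq with h | h
    · exact h
    · exfalso
      have := ((hpos E hE).2.2 h.symm).2
      omega
  by_cases hiso : IsIso f
  · -- Case 1 : f is an isomorphism
    have hclE : cl E = cl E'' := by
      rw [cl_cok cl hses f hf, hcl0 _ (isZero_cok_of_isIso f hiso), add_zero]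
    have hgfniso : ¬ IsIso (g ≫ f) := by
      intro hi
      haveI := hi; haveI := hiso
      have hgeq : g = (g ≫ f) ≫ inv f := by simp
      rw [hgeq] at hgiso
      exact hgiso inferInstance
    unfold slopeLT
    rw [← hclE]
    by_contra hcon
    push_neg at hcon
    have hle := hsst F (g ≫ f) hgfmono hFne hgfniso
    unfold slopeLE at hle
    have hχ : (d (cl F) + c * v (cl F)) * r (cl E) = (d (cl E) + c * v (cl E)) * r (cl F) :=
      le_antisymm hle hcon
    -- slope comparison at c + ε
    have h3 : (d (cl F) + (c + δ₁/2) * v (cl F)) * r (cl E)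
        ≤ (d (cl E) + (c + δ₁/2) * v (cl E)) * r (cl F) := by
      rcases hHN (δ₁/2) (by linarith) (by linarith) with ⟨_, hss⟩ | ⟨hn, _⟩
      · exact hss F (g ≫ f) hgfmono hFne hgfniso
      · exact absurd hiso hn
    have h4 := hminus (δ₂/2) (by linarith) (by linarith) F (g ≫ f) hgfmono hFne hgfniso
    unfold slopeLT at h4
    have hs1 : (v (cl F) : ℝ) * r (cl E) - (v (cl E) : ℝ) * r (cl F) ≤ 0 := by
      by_contra hc2
      push_neg at hc2
      have hkey : 0 < (δ₁/2) * ((v (cl F) : ℝ) * r (cl E) - (v (cl E) : ℝ) * r (cl F)) :=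
        mul_pos (by linarith) hc2
      linarith [h3, hχ, hkey]
    have hkey2 : 0 ≤ (δ₂/2) * ((v (cl E) : ℝ) * r (cl F) - (v (cl F) : ℝ) * r (cl E)) :=
      mul_nonneg (by linarith) (by linarith)
    linarith [h4, hχ, hkey2]
  · -- Case 2 : E'' is a proper subobject
    have hQne : ¬ IsZero (cokernel f) := not_isZero_cok f hf hiso
    have hGne : ¬ IsZero (cokernel g) := not_isZero_cok g hg hgiso
    have hgfniso : ¬ IsIso (g ≫ f) := by
      intro hi
      haveI := hi
      haveI : Epi f := epi_of_epi g f
      exact hiso (isIso_of_mono_of_epi f)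
    have hclEe : cl E = cl E'' + cl (cokernel f) := cl_cok cl hses f hf
    have hclE''e : cl E'' = cl F + cl (cokernel g) := cl_cok cl hses g hg
    have hdEe : d (cl E) = d (cl E'') + d (cl (cokernel f)) := by rw [hclEe, map_add]
    have hrEe : r (cl E) = r (cl E'') + r (cl (cokernel f)) := by rw [hclEe, map_add]
    have hvEe : v (cl E) = v (cl E'') + v (cl (cokernel f)) := by rw [hclEe, map_add]
    have hdE''e : d (cl E'') = d (cl F) + d (cl (cokernel g)) := by rw [hclE''e, map_add]
    have hrE''e : r (cl E'') = r (cl F) + r (cl (cokernel g)) := by rw [hclE''e, map_add]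
    have hvE''e : v (cl E'') = v (cl F) + v (cl (cokernel g)) := by rw [hclE''e, map_add]
    have hHN2 : ∀ ε : ℝ, 0 < ε → ε < δ₁ → IsSemistableAt cl d r v (c+ε) E'' ∧
        slopeLT d r v (c+ε) (cl (cokernel f)) (cl E'') := by
      intro ε h1 h2
      rcases hHN ε h1 h2 with ⟨hi, _⟩ | ⟨_, h3, _, h4⟩
      · exact absurd hi hiso
      · exact ⟨h3, h4⟩
    -- φ : comparison of F with E''
    have hφε : ∀ ε : ℝ, 0 < ε → ε < δ₁ →
        (d (cl F) + (c+ε) * v (cl F)) * r (cl E'')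
          ≤ (d (cl E'') + (c+ε) * v (cl E'')) * r (cl F) := by
      intro ε h1 h2
      exact (hHN2 ε h1 h2).1 F g hg hFne hgiso
    have hφ0 : (d (cl F) + c * v (cl F)) * r (cl E'')
        - (d (cl E'') + c * v (cl E'')) * r (cl F) ≤ 0 := by
      apply aux_nonpos _ ((v (cl F) : ℝ) * r (cl E'') - (v (cl E'') : ℝ) * r (cl F)) δ₁ hδ₁
      intro ε h1 h2
      have := hφε ε h1 h2
      nlinarith [this]
    unfold slopeLT
    by_contra hcon
    push_neg at hcon
    have hφ : (d (cl F) + c * v (cl F)) * r (cl E'')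
        = (d (cl E'') + c * v (cl E'')) * r (cl F) := by linarith
    -- ψ : comparison of E'' with E
    have hψε : ∀ ε : ℝ, 0 < ε → ε < δ₁ →
        0 < (d (cl E'') + (c+ε) * v (cl E'')) * r (cl E)
          - (d (cl E) + (c+ε) * v (cl E)) * r (cl E'') := by
      intro ε h1 h2
      have h3 := (hHN2 ε h1 h2).2
      unfold slopeLT at h3
      rw [hdEe, hrEe, hvEe]
      push_cast
      nlinarith [h3]
    have hψle := hsst E'' f hf hne hiso
    unfold slopeLE at hψle
    have hψge : 0 ≤ (d (cl E'') + c * v (cl E'')) * r (cl E)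
        - (d (cl E) + c * v (cl E)) * r (cl E'') := by
      apply aux_nonneg _ ((v (cl E'') : ℝ) * r (cl E) - (v (cl E) : ℝ) * r (cl E'')) δ₁ hδ₁
      intro ε h1 h2
      have := hψε ε h1 h2
      nlinarith [this]
    have hψ : (d (cl E'') + c * v (cl E'')) * r (cl E)
        = (d (cl E) + c * v (cl E)) * r (cl E'') := by linarith
    have hsψ : 0 < (v (cl E'') : ℝ) * r (cl E) - (v (cl E) : ℝ) * r (cl E'') := by
      by_contra hcon2
      push_neg at hcon2
      have h3 := hψε (δ₁/2) (by linarith) (by linarith)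
      have hkey : 0 ≤ (δ₁/2) * ((v (cl E) : ℝ) * r (cl E'') - (v (cl E'') : ℝ) * r (cl E)) :=
        mul_nonneg (by linarith) (by linarith)
      linarith [hψ, h3, hkey]
    -- positivity of ranks
    have hrE''pos : 0 < r (cl E'') := by
      rcases (hpos E'' hne).1.lt_or_eq with h | h
      · exact h
      · exfalso
        obtain ⟨hd, hv⟩ := (hpos E'' hne).2.2 h.symm
        have hvr : (v (cl E'') : ℝ) = 0 := by rw [hv]; norm_num
        rw [← h, hvr] at hψ
        nlinarith [hψ, hd, hrEpos]
    have hrF : 0 ≤ r (cl F) := (hpos F hFne).1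
    have hrG : 0 ≤ r (cl (cokernel g)) := (hpos _ hGne).1
    have hvQ : 0 ≤ v (cl (cokernel f)) := (hpos _ hQne).2.1
    have hvG : 0 ≤ v (cl (cokernel g)) := (hpos _ hGne).2.1
    -- v (cl E'') = 1
    have hvE''pos : 0 < (v (cl E'') : ℝ) := by
      by_contra hcon2
      push_neg at hcon2
      have hmp : (v (cl E'') : ℝ) * r (cl E) ≤ 0 :=
        mul_nonpos_of_nonpos_of_nonneg hcon2 hrEpos.le
      rw [hvEr] at hsψ
      linarith
    have hvE''int : (0 : ℤ) < v (cl E'') := by exact_mod_cast hvE''pos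
    have hvE''1 : v (cl E'') = 1 := by omega
    -- χ : comparison of F with E at c, an equality
    have hχ : (d (cl F) + c * v (cl F)) * r (cl E) = (d (cl E) + c * v (cl E)) * r (cl F) := by
      apply mul_right_cancel₀ (ne_of_gt hrE''pos)
      linear_combination r (cl E) * hφ + r (cl F) * hψ
    have hlt := hminus (δ₂/2) (by linarith) (by linarith) F (g ≫ f) hgfmono hFne hgfniso
    unfold slopeLT at hlt
    have hsχ : 0 < (v (cl F) : ℝ) * r (cl E) - (v (cl E) : ℝ) * r (cl F) := by
      by_contra hcon2
      push_neg at hcon2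
      have hkey : 0 ≤ (δ₂/2) * ((v (cl E) : ℝ) * r (cl F) - (v (cl F) : ℝ) * r (cl E)) :=
        mul_nonneg (by linarith) (by linarith)
      linarith [hlt, hχ, hkey]
    have hvFpos : 0 < (v (cl F) : ℝ) := by
      by_contra hcon2
      push_neg at hcon2
      have hmp : (v (cl F) : ℝ) * r (cl E) ≤ 0 :=
        mul_nonpos_of_nonpos_of_nonneg hcon2 hrEpos.le
      rw [hvEr] at hsχ
      linarith
    have hvFint : (0 : ℤ) < v (cl F) := by exact_mod_cast hvFpos
    have hvF1 : v (cl F) = 1 := by omega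
    have hvG0 : v (cl (cokernel g)) = 0 := by omega
    -- slope of φ is nonpositive, so r (cl E'') ≤ r (cl F)
    have hsφ : (v (cl F) : ℝ) * r (cl E'') - (v (cl E'') : ℝ) * r (cl F) ≤ 0 := by
      by_contra hcon2
      push_neg at hcon2
      have h3 := hφε (δ₁/2) (by linarith) (by linarith)
      have hkey : 0 < (δ₁/2) * ((v (cl F) : ℝ) * r (cl E'') - (v (cl E'') : ℝ) * r (cl F)) :=
        mul_pos (by linarith) hcon2
      linarith [hφ, h3, hkey]
    have hvFr : (v (cl F) : ℝ) = 1 := by rw [hvF1]; norm_num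
    have hvE''r : (v (cl E'') : ℝ) = 1 := by rw [hvE''1]; norm_num
    have hrle : r (cl E'') ≤ r (cl F) := by
      rw [hvFr, hvE''r] at hsφ
      linarith
    have hrG0 : r (cl (cokernel g)) = 0 := by linarith [hrE''e, hrle]
    have hdG : 0 < d (cl (cokernel g)) := ((hpos _ hGne).2.2 hrG0).1
    have hrFeq : r (cl F) = r (cl E'') := by rw [hrE''e, hrG0]; ring
    have hdeq : d (cl F) + c = d (cl E'') + c := by
      apply mul_right_cancel₀ (ne_of_gt hrE''pos)
      rw [hvFr, hvE''r, hrFeq] at hφ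
      linarith [hφ]
    linarith [hdE''e, hdG, hdeq]
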